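/- Let (a_n) be defined by a_1 = 1, a_2 = c, and a_{n+2} = a_{n+1} + a_n for n ≥ 1, where c is a positive integer. Then (a_n) satisfies the Dold condition n | ∑_{d|n} μ(n/d) a_d for all n ≥ 1 if and only if c = 3. -/

import Mathlib

/-- A sequence `a : ℕ → ℕ` (indexed from 1) is realizable if there is a set `X`
and a map `T : X → X` such that for every `n ≥ 1` the set of points fixed by the
`n`-th iterate of `T` is finite with cardinality `a n`. -/
def IsRealizable (a : ℕ → ℕ) : Prop :=
  ∃ (X : Type) (T : X → X), ∀ n : ℕ, 1 ≤ n →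
    {x : X | T^[n] x = x}.Finite ∧ {x : X | T^[n] x = x}.ncard = a n

/-- The Möbius-transformed sum `∑_{d ∣ n} μ(n/d) a_d`. -/
def doldSum (a : ℕ → ℕ) (n : ℕ) : ℤ :=
  ∑ d ∈ n.divisors, (ArithmeticFunction.moebius (n / d) : ℤ) * (a d : ℤ)

open Finset Real goldenRatio ArithmeticFunction

private def Luc : ℕ → ℕ
  | 0 => 2
  | 1 => 1
  | n + 2 => Luc (n + 1) + Luc n

private lemma luc_real : ∀ n : ℕ, (Luc n : ℝ) = φ ^ n + ψ ^ n
  | 0 => by norm_num [Luc]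
  | 1 => by
      show ((1 : ℕ) : ℝ) = φ ^ 1 + ψ ^ 1
      rw [pow_one, pow_one, goldenRatio_add_goldenConj]; norm_num
  | n + 2 => by
      show ((Luc (n + 1) + Luc n : ℕ) : ℝ) = _
      push_cast [luc_real (n + 1), luc_real n]
      have h1 : φ ^ (n + 2) = φ ^ (n + 1) + φ ^ n := by
        calc φ ^ (n + 2) = φ ^ n * φ ^ 2 := by ring
          _ = φ ^ n * (φ + 1) := by rw [goldenRatio_sq]
          _ = φ ^ (n + 1) + φ ^ n := by ring
      have h2 : ψ ^ (n + 2) = ψ ^ (n + 1) + ψ ^ n := by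
        calc ψ ^ (n + 2) = ψ ^ n * ψ ^ 2 := by ring
          _ = ψ ^ n * (ψ + 1) := by rw [goldenConj_sq]
          _ = ψ ^ (n + 1) + ψ ^ n := by ring
      rw [h1, h2]; ring

private lemma luc_two_mul (n : ℕ) : (Luc (2 * n) : ℤ) = (Luc n : ℤ) ^ 2 - 2 * (-1) ^ n := by
  have : ((Luc (2 * n) : ℤ) : ℝ) = (((Luc n : ℤ) ^ 2 - 2 * (-1) ^ n : ℤ) : ℝ) := by
    push_cast
    rw [luc_real, luc_real, ← goldenRatio_mul_goldenConj, mul_pow, two_mul, pow_add, pow_add]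
    ring
  exact_mod_cast this

private lemma luc_pow_odd {p : ℕ} (hp : Odd p) (n : ℕ) :
    (Luc n : ℤ) ^ p = ∑ j ∈ Finset.range (p / 2 + 1),
      (p.choose j : ℤ) * (-1) ^ (n * j) * (Luc (n * (p - 2 * j)) : ℤ) := by
  obtain ⟨h, rfl⟩ := hp
  have hdiv : (2 * h + 1) / 2 = h := by omega
  rw [hdiv]
  have : (((Luc n : ℤ) ^ (2 * h + 1) : ℤ) : ℝ) = ((∑ j ∈ Finset.range (h + 1),
      ((2 * h + 1).choose j : ℤ) * (-1) ^ (n * j) * (Luc (n * (2 * h + 1 - 2 * j)) : ℤ) : ℤ) : ℝ) := by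
    push_cast
    rw [luc_real]
    rw [add_pow]
    have hsplit : (2 * h + 1) + 1 = (h + 1) + (h + 1) := by omega
    rw [hsplit, Finset.sum_range_add]
    rw [← Finset.sum_range_reflect (fun x => (φ ^ n) ^ (h + 1 + x) * (ψ ^ n) ^ (2 * h + 1 - (h + 1 + x)) * ((2 * h + 1).choose (h + 1 + x) : ℝ)) (h + 1)]
    rw [← Finset.sum_add_distrib]
    refine Finset.sum_congr rfl fun j hj => ?_
    have hjh : j ≤ h := by have := Finset.mem_range.mp hj; omega
    have e1 : h + 1 + (h + 1 - 1 - j) = 2 * h + 1 - j := by omega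
    have e2 : 2 * h + 1 - (2 * h + 1 - j) = j := by omega
    have e3 : 2 * h + 1 - (h + 1 + (h + 1 - 1 - j)) = j := by omega
    rw [e1, e2]
    have hcs : (2 * h + 1).choose (2 * h + 1 - j) = (2 * h + 1).choose j :=
      Nat.choose_symm (by omega)
    rw [hcs, luc_real, ← pow_mul, ← pow_mul, ← pow_mul, ← pow_mul]
    have e0 : 2 * h + 1 - j = j + (2 * h + 1 - 2 * j) := by omega
    rw [e0, Nat.mul_add, pow_add, pow_add, ← goldenRatio_mul_goldenConj, mul_pow]
    ring
  exact_mod_cast this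

private lemma luc_mul_odd (p : ℕ) (hodd : Odd p) (n : ℕ) :
    (Luc (n * p) : ℤ) = (Luc n : ℤ) ^ p - ∑ i ∈ Finset.range (p / 2),
      (p.choose (i + 1) : ℤ) * (-1) ^ (n * (i + 1)) * (Luc (n * (p - 2 * (i + 1))) : ℤ) := by
  have h := luc_pow_odd hodd n
  rw [Finset.sum_range_succ'] at h
  simp only [Nat.choose_zero_right, Nat.cast_one, mul_zero, pow_zero, Nat.sub_zero, one_mul,
    mul_one] at h
  linarith

private lemma neg_one_pow_mul_odd {q : ℕ} (hq : Odd q) (s : ℕ) :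
    ((-1 : ℤ)) ^ (s * q) = (-1) ^ s := by
  rcases Nat.even_or_odd s with hs | hs
  · rw [hs.neg_one_pow, (hs.mul_right q).neg_one_pow]
  · rw [hs.neg_one_pow, (hs.mul hq).neg_one_pow]

private lemma pow_dvd_pow_sub_pow {p : ℕ} (hp : p.Prime) (k : ℕ) (A B : ℤ)
    (h : (p : ℤ) ^ (k + 1) ∣ A - B) : (p : ℤ) ^ (k + 2) ∣ A ^ p - B ^ p := by
  haveI := Fact.mk hp
  have hAB : (p : ℤ) ∣ A - B := dvd_trans (dvd_pow_self _ (Nat.succ_ne_zero k)) h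
  have hA : ((A : ZMod p)) = (B : ZMod p) := by
    have h0 : ((A - B : ℤ) : ZMod p) = 0 := by
      rw [ZMod.intCast_zmod_eq_zero_iff_dvd]; exact_mod_cast hAB
    push_cast at h0
    linear_combination h0
  have hS : (p : ℤ) ∣ ∑ i ∈ Finset.range p, A ^ i * B ^ (p - 1 - i) := by
    rw [← ZMod.intCast_zmod_eq_zero_iff_dvd]
    push_cast
    calc ∑ i ∈ Finset.range p, (A : ZMod p) ^ i * (B : ZMod p) ^ (p - 1 - i)
        = ∑ i ∈ Finset.range p, (B : ZMod p) ^ (p - 1) := by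
          refine Finset.sum_congr rfl fun i hi => ?_
          rw [hA, ← pow_add]
          congr 1
          have := Finset.mem_range.mp hi; omega
      _ = (p : ZMod p) * (B : ZMod p) ^ (p - 1) := by
          rw [Finset.sum_const, Finset.card_range, nsmul_eq_mul]
      _ = 0 := by rw [ZMod.natCast_self, zero_mul]
  rw [← geom_sum₂_mul]
  have e : (p : ℤ) ^ (k + 2) = (p : ℤ) * (p : ℤ) ^ (k + 1) := by ring
  rw [e]
  exact mul_dvd_mul hS h

private lemma luc_pp {p : ℕ} (hp : p.Prime) :
    ∀ k, 1 ≤ k → ∀ m : ℕ, (p : ℤ) ^ k ∣ (Luc (m * p ^ k) : ℤ) - (Luc (m * p ^ (k - 1)) : ℤ) := by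
  intro k
  induction k with
  | zero => omega
  | succ k ih =>
    intro _ m
    rcases Nat.eq_zero_or_pos k with rfl | hk
    · -- base case k+1 = 1
      simp only [zero_add, pow_one, pow_zero, mul_one, Nat.sub_self]
      rcases hp.eq_two_or_odd' with rfl | hodd
      · rw [mul_comm m 2, luc_two_mul]
        have h1 : (2 : ℤ) ∣ ((Luc m : ℤ) - 1) * ((Luc m : ℤ) - 1 + 1) :=
          (Int.even_mul_succ_self _).two_dvd
        have : (Luc m : ℤ) ^ 2 - 2 * (-1) ^ m - (Luc m : ℤ)
            = ((Luc m : ℤ) - 1) * ((Luc m : ℤ) - 1 + 1) - 2 * (-1) ^ m := by ring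
        rw [this]
        exact dvd_sub h1 ⟨(-1) ^ m, rfl⟩
      · rw [luc_mul_odd p hodd m]
        have hferm : (p : ℤ) ∣ (Luc m : ℤ) ^ p - (Luc m : ℤ) := by
          haveI := Fact.mk hp
          rw [← ZMod.intCast_zmod_eq_zero_iff_dvd]
          push_cast
          rw [ZMod.pow_card]
          ring
        have hsum : (p : ℤ) ∣ ∑ i ∈ Finset.range (p / 2),
            (p.choose (i + 1) : ℤ) * (-1) ^ (m * (i + 1)) * (Luc (m * (p - 2 * (i + 1))) : ℤ) := by
          refine Finset.dvd_sum fun i hi => ?_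
          have hc : (p : ℤ) ∣ (p.choose (i + 1) : ℤ) := by
            exact_mod_cast Int.natCast_dvd_natCast.mpr
              (hp.dvd_choose_self (Nat.succ_ne_zero i)
                (by have := Finset.mem_range.mp hi; omega))
          exact Dvd.dvd.mul_right (Dvd.dvd.mul_right hc _) _
        have : (Luc m : ℤ) ^ p - (∑ i ∈ Finset.range (p / 2),
            (p.choose (i + 1) : ℤ) * (-1) ^ (m * (i + 1)) * (Luc (m * (p - 2 * (i + 1))) : ℤ))
            - (Luc m : ℤ)
            = ((Luc m : ℤ) ^ p - (Luc m : ℤ)) - ∑ i ∈ Finset.range (p / 2),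
            (p.choose (i + 1) : ℤ) * (-1) ^ (m * (i + 1)) * (Luc (m * (p - 2 * (i + 1))) : ℤ) := by
          ring
        rw [this]
        exact dvd_sub hferm hsum
    · -- inductive step: k ≥ 1, prove for k+1
      obtain ⟨k', rfl⟩ : ∃ t, k = t + 1 := ⟨k - 1, by omega⟩
      simp only [Nat.add_sub_cancel] at ih ⊢
      have ih' := fun m => ih (by omega) m
      rcases hp.eq_two_or_odd' with rfl | hodd
      · -- p = 2
        set A : ℤ := (Luc (m * 2 ^ (k' + 1)) : ℤ) with hAdef
        set B : ℤ := (Luc (m * 2 ^ k') : ℤ) with hBdef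
        have e1 : m * 2 ^ (k' + 2) = 2 * (m * 2 ^ (k' + 1)) := by ring
        have e2 : m * 2 ^ (k' + 1) = 2 * (m * 2 ^ k') := by ring
        have hIH : (2 : ℤ) ^ (k' + 1) ∣ A - B := ih' m
        have h2AB : (2 : ℤ) ∣ A - B :=
          dvd_trans (dvd_pow_self _ (Nat.succ_ne_zero k')) hIH
        have hsq : (2 : ℤ) ^ (k' + 2) ∣ A ^ 2 - B ^ 2 := by
          have : A ^ 2 - B ^ 2 = (A - B) * (A + B) := by ring
          rw [this]
          have hsum2 : (2 : ℤ) ∣ A + B := by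
            obtain ⟨t, ht⟩ := h2AB
            exact ⟨t + B, by linarith⟩
          have : (2 : ℤ) ^ (k' + 2) = 2 ^ (k' + 1) * 2 := by ring
          rw [this]
          exact mul_dvd_mul hIH hsum2
        have hsign : (2 : ℤ) ^ (k' + 2) ∣
            2 * ((-1 : ℤ) ^ (m * 2 ^ (k' + 1)) - (-1 : ℤ) ^ (m * 2 ^ k')) := by
          rcases Nat.eq_zero_or_pos k' with rfl | hk'
          · simp only [pow_zero, mul_one, pow_one]
            have : (-1 : ℤ) ^ (m * 2 ^ (0 + 1)) = 1 := by
              refine Even.neg_one_pow ?_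
              exact ⟨m, by ring⟩
            rw [this]
            rcases Nat.even_or_odd m with hm | hm
            · rw [hm.neg_one_pow]; simp
            · rw [hm.neg_one_pow]
              exact ⟨1, by ring⟩
          · have hev : ∀ j, 1 ≤ j → (-1 : ℤ) ^ (m * 2 ^ j) = 1 := fun j hj =>
              Even.neg_one_pow ⟨m * 2 ^ (j - 1), by
                have : 2 ^ j = 2 ^ (j - 1) * 2 := by
                  rw [← pow_succ]; congr 1; omega
                rw [this]; ring⟩
            rw [hev (k' + 1) (by omega), hev k' hk']
            simp
        have egoal : (Luc (m * 2 ^ (k' + 2)) : ℤ) - A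
            = (A ^ 2 - B ^ 2) - 2 * ((-1 : ℤ) ^ (m * 2 ^ (k' + 1)) - (-1 : ℤ) ^ (m * 2 ^ k')) := by
          rw [e1, luc_two_mul, hAdef, e2, luc_two_mul]
          ring
        rw [egoal]
        exact dvd_sub hsq hsign
      · -- p odd
        have hoddpow : ∀ j : ℕ, Odd (p ^ j) := fun j => hodd.pow
        set A : ℤ := (Luc (m * p ^ (k' + 1)) : ℤ) with hAdef
        set B : ℤ := (Luc (m * p ^ k') : ℤ) with hBdef
        have e1 : m * p ^ (k' + 2) = (m * p ^ (k' + 1)) * p := by ring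
        have e2 : m * p ^ (k' + 1) = (m * p ^ k') * p := by ring
        have hIH : (p : ℤ) ^ (k' + 1) ∣ A - B := ih' m
        have hpow : (p : ℤ) ^ (k' + 2) ∣ A ^ p - B ^ p := pow_dvd_pow_sub_pow hp k' A B hIH
        have hsum : (p : ℤ) ^ (k' + 2) ∣
            (∑ i ∈ Finset.range (p / 2), (p.choose (i + 1) : ℤ)
              * (-1) ^ ((m * p ^ (k' + 1)) * (i + 1)) * (Luc ((m * p ^ (k' + 1)) * (p - 2 * (i + 1))) : ℤ))
            - (∑ i ∈ Finset.range (p / 2), (p.choose (i + 1) : ℤ)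
              * (-1) ^ ((m * p ^ k') * (i + 1)) * (Luc ((m * p ^ k') * (p - 2 * (i + 1))) : ℤ)) := by
          rw [← Finset.sum_sub_distrib]
          refine Finset.dvd_sum fun i hi => ?_
          have hsgn1 : ((-1 : ℤ)) ^ ((m * p ^ (k' + 1)) * (i + 1)) = (-1) ^ (m * (i + 1)) := by
            have : (m * p ^ (k' + 1)) * (i + 1) = (m * (i + 1)) * p ^ (k' + 1) := by ring
            rw [this, neg_one_pow_mul_odd (hoddpow _)]
          have hsgn2 : ((-1 : ℤ)) ^ ((m * p ^ k') * (i + 1)) = (-1) ^ (m * (i + 1)) := by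
            have : (m * p ^ k') * (i + 1) = (m * (i + 1)) * p ^ k' := by ring
            rw [this, neg_one_pow_mul_odd (hoddpow _)]
          rw [hsgn1, hsgn2]
          have hc : (p : ℤ) ∣ (p.choose (i + 1) : ℤ) :=
            Int.natCast_dvd_natCast.mpr (hp.dvd_choose_self (Nat.succ_ne_zero i)
              (by have := Finset.mem_range.mp hi
                  have := hp.two_le
                  omega))
          have hih2 : (p : ℤ) ^ (k' + 1) ∣
              (Luc ((m * p ^ (k' + 1)) * (p - 2 * (i + 1))) : ℤ)
              - (Luc ((m * p ^ k') * (p - 2 * (i + 1))) : ℤ) := by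
            have e3 : (m * p ^ (k' + 1)) * (p - 2 * (i + 1)) = (m * (p - 2 * (i + 1))) * p ^ (k' + 1) := by ring
            have e4 : (m * p ^ k') * (p - 2 * (i + 1)) = (m * (p - 2 * (i + 1))) * p ^ k' := by ring
            rw [e3, e4]
            exact ih' _
          have : (p.choose (i + 1) : ℤ) * (-1) ^ (m * (i + 1)) * (Luc ((m * p ^ (k' + 1)) * (p - 2 * (i + 1))) : ℤ)
              - (p.choose (i + 1) : ℤ) * (-1) ^ (m * (i + 1)) * (Luc ((m * p ^ k') * (p - 2 * (i + 1))) : ℤ)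
              = ((p.choose (i + 1) : ℤ) * ((Luc ((m * p ^ (k' + 1)) * (p - 2 * (i + 1))) : ℤ)
                - (Luc ((m * p ^ k') * (p - 2 * (i + 1))) : ℤ))) * (-1) ^ (m * (i + 1)) := by ring
          rw [this]
          have : (p : ℤ) ^ (k' + 2) = (p : ℤ) * (p : ℤ) ^ (k' + 1) := by ring
          rw [this]
          exact Dvd.dvd.mul_right (mul_dvd_mul hc hih2) _
        have egoal : (Luc (m * p ^ (k' + 2)) : ℤ) - A = (A ^ p - B ^ p) -
            ((∑ i ∈ Finset.range (p / 2), (p.choose (i + 1) : ℤ)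
              * (-1) ^ ((m * p ^ (k' + 1)) * (i + 1)) * (Luc ((m * p ^ (k' + 1)) * (p - 2 * (i + 1))) : ℤ))
            - (∑ i ∈ Finset.range (p / 2), (p.choose (i + 1) : ℤ)
              * (-1) ^ ((m * p ^ k') * (i + 1)) * (Luc ((m * p ^ k') * (p - 2 * (i + 1))) : ℤ))) := by
          rw [e1, luc_mul_odd p hodd, hAdef, e2, luc_mul_odd p hodd]
          ring
        rw [egoal]
        exact dvd_sub hpow hsum

private lemma moebius_pp_sum {p : ℕ} (hp : p.Prime) (k : ℕ) (hk : 1 ≤ k) (g : ℕ → ℤ) :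
    ∑ j ∈ Finset.range (k + 1), (ArithmeticFunction.moebius (p ^ (k - j)) : ℤ) * g j
      = g k - g (k - 1) := by
  obtain ⟨k', rfl⟩ : ∃ t, k = t + 1 := ⟨k - 1, by omega⟩
  rw [Finset.sum_range_succ, Finset.sum_range_succ]
  rw [Finset.sum_eq_zero (fun j hj => ?_)]
  · have e1 : k' + 1 - k' = 1 := by omega
    have e2 : k' + 1 - (k' + 1) = 0 := by omega
    have e3 : k' + 1 - 1 = k' := by omega
    rw [e1, e2, e3, pow_one, pow_zero, moebius_apply_prime hp, moebius_apply_one]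
    push_cast
    ring
  · have hj := Finset.mem_range.mp hj
    rw [moebius_apply_prime_pow hp (by omega : k' + 1 - j ≠ 0), if_neg (by omega)]
    push_cast
    ring

private lemma doldSum_prime_pow (b : ℕ → ℕ) {p : ℕ} (hp : p.Prime) (k : ℕ) (hk : 1 ≤ k) :
    doldSum b (p ^ k) = (b (p ^ k) : ℤ) - (b (p ^ (k - 1)) : ℤ) := by
  unfold doldSum
  rw [Nat.sum_divisors_prime_pow hp]
  have h : ∀ j ∈ Finset.range (k + 1),
      (ArithmeticFunction.moebius (p ^ k / p ^ j) : ℤ) * (b (p ^ j) : ℤ)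
      = (ArithmeticFunction.moebius (p ^ (k - j)) : ℤ) * (b (p ^ j) : ℤ) := by
    intro j hj
    rw [Nat.pow_div (by have := Finset.mem_range.mp hj; omega) hp.pos]
  rw [Finset.sum_congr rfl h, moebius_pp_sum hp k hk (fun j => (b (p ^ j) : ℤ))]

private lemma sum_divisors_coprime_mul {a b : ℕ} (hab : Nat.Coprime a b) (ha : a ≠ 0)
    (hb : b ≠ 0) (f : ℕ → ℤ) :
    ∑ d ∈ (a * b).divisors, f d = ∑ i ∈ a.divisors, ∑ j ∈ b.divisors, f (i * j) := by
  rw [← Finset.sum_product']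
  refine Finset.sum_nbij' (fun d => (d.gcd a, d.gcd b)) (fun q => q.1 * q.2) ?_ ?_ ?_ ?_ ?_
  · intro d hd
    obtain ⟨hdvd, -⟩ := Nat.mem_divisors.mp hd
    exact Finset.mem_product.mpr ⟨Nat.mem_divisors.mpr ⟨Nat.gcd_dvd_right _ _, ha⟩,
      Nat.mem_divisors.mpr ⟨Nat.gcd_dvd_right _ _, hb⟩⟩
  · intro q hq
    obtain ⟨h1, h2⟩ := Finset.mem_product.mp hq
    exact Nat.mem_divisors.mpr ⟨mul_dvd_mul (Nat.mem_divisors.mp h1).1 (Nat.mem_divisors.mp h2).1,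
      mul_ne_zero ha hb⟩
  · intro d hd
    exact (Nat.gcd_mul_gcd_eq_iff_dvd_mul_of_coprime hab).mpr (Nat.mem_divisors.mp hd).1
  · intro q hq
    obtain ⟨h1, h2⟩ := Finset.mem_product.mp hq
    have hi : q.1 ∣ a := (Nat.mem_divisors.mp h1).1
    have hj : q.2 ∣ b := (Nat.mem_divisors.mp h2).1
    have hja : Nat.Coprime q.2 a := Nat.Coprime.coprime_dvd_left hj hab.symm
    have hib : Nat.Coprime q.1 b := Nat.Coprime.coprime_dvd_left hi hab
    have g1 : (q.1 * q.2).gcd a = q.1 := by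
      rw [Nat.Coprime.gcd_mul_right_cancel q.1 hja]
      exact Nat.gcd_eq_left hi
    have g2 : (q.1 * q.2).gcd b = q.2 := by
      rw [mul_comm, Nat.Coprime.gcd_mul_right_cancel q.2 hib]
      exact Nat.gcd_eq_left hj
    rw [g1, g2]
  · intro d hd
    congr 1
    exact ((Nat.gcd_mul_gcd_eq_iff_dvd_mul_of_coprime hab).mpr (Nat.mem_divisors.mp hd).1).symm

private lemma luc_dold_pp {p k m : ℕ} (hp : p.Prime) (hk : 1 ≤ k) (hpm : ¬ p ∣ m)
    (hm : m ≠ 0) : (p : ℤ) ^ k ∣ doldSum Luc (p ^ k * m) := by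
  have hcop : Nat.Coprime (p ^ k) m := (Nat.Coprime.pow_left k ((Nat.Prime.coprime_iff_not_dvd hp).mpr hpm))
  unfold doldSum
  rw [sum_divisors_coprime_mul hcop (pow_ne_zero k hp.pos.ne') hm]
  rw [Nat.sum_divisors_prime_pow hp]
  have step1 : ∀ j ∈ Finset.range (k + 1),
      (∑ e ∈ m.divisors, (ArithmeticFunction.moebius (p ^ k * m / (p ^ j * e)) : ℤ) * (Luc (p ^ j * e) : ℤ))
      = (ArithmeticFunction.moebius (p ^ (k - j)) : ℤ)
        * ∑ e ∈ m.divisors, (ArithmeticFunction.moebius (m / e) : ℤ) * (Luc (p ^ j * e) : ℤ) := by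
    intro j hj
    rw [Finset.mul_sum]
    refine Finset.sum_congr rfl fun e he => ?_
    have hj' : j ≤ k := by have := Finset.mem_range.mp hj; omega
    have he' : e ∣ m := (Nat.mem_divisors.mp he).1
    have harg : p ^ k * m / (p ^ j * e) = p ^ (k - j) * (m / e) := by
      rw [← Nat.div_mul_div_comm (pow_dvd_pow p hj') he', Nat.pow_div hj' hp.pos]
    have hcop2 : Nat.Coprime (p ^ (k - j)) (m / e) :=
      Nat.Coprime.coprime_dvd_right (Nat.div_dvd_of_dvd he')
        (Nat.Coprime.pow_left _ ((Nat.Prime.coprime_iff_not_dvd hp).mpr hpm))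
    rw [harg, ArithmeticFunction.isMultiplicative_moebius.map_mul_of_coprime hcop2]
    push_cast
    ring
  rw [Finset.sum_congr rfl step1,
    moebius_pp_sum hp k hk (fun j => ∑ e ∈ m.divisors, (ArithmeticFunction.moebius (m / e) : ℤ) * (Luc (p ^ j * e) : ℤ))]
  rw [← Finset.sum_sub_distrib]
  refine Finset.dvd_sum fun e he => ?_
  have key := luc_pp hp k hk e
  have e1 : p ^ k * e = e * p ^ k := by ring
  have e2 : p ^ (k - 1) * e = e * p ^ (k - 1) := by ring
  rw [e1, e2]
  have : (ArithmeticFunction.moebius (m / e) : ℤ) * (Luc (e * p ^ k) : ℤ)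
      - (ArithmeticFunction.moebius (m / e) : ℤ) * (Luc (e * p ^ (k - 1)) : ℤ)
      = ((Luc (e * p ^ k) : ℤ) - (Luc (e * p ^ (k - 1)) : ℤ)) * (ArithmeticFunction.moebius (m / e) : ℤ) := by
    ring
  rw [this]
  exact Dvd.dvd.mul_right key _

private lemma luc_dold (n : ℕ) (hn : 1 ≤ n) : (n : ℤ) ∣ doldSum Luc n := by
  have hn0 : n ≠ 0 := by omega
  have key : ∀ p ∈ n.primeFactors, ((p : ℤ) ^ (n.factorization p)) ∣ doldSum Luc n := by
    intro p hpmem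
    have hp : p.Prime := Nat.prime_of_mem_primeFactors hpmem
    have hpd : p ∣ n := Nat.dvd_of_mem_primeFactors hpmem
    have hk : 1 ≤ n.factorization p := (Nat.Prime.factorization_pos_of_dvd hp hn0 hpd)
    have hmn : p ^ (n.factorization p) * (n / p ^ (n.factorization p)) = n :=
      Nat.ordProj_mul_ordCompl_eq_self n p
    have hpm : ¬ p ∣ (n / p ^ (n.factorization p)) := Nat.not_dvd_ordCompl hp hn0
    have hm0 : (n / p ^ (n.factorization p)) ≠ 0 := (Nat.ordCompl_pos p hn0).ne'
    have h := luc_dold_pp hp hk hpm hm0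
    rwa [hmn] at h
  have hpair : (↑n.primeFactors : Set ℕ).Pairwise
      (Function.onFun IsCoprime fun p => (p : ℤ) ^ (n.factorization p)) := by
    intro p hpm q hqm hne
    have hp := Nat.prime_of_mem_primeFactors hpm
    have hq := Nat.prime_of_mem_primeFactors hqm
    exact (Nat.isCoprime_iff_coprime.mpr ((Nat.coprime_primes hp hq).mpr hne)).pow
  have hprod := Finset.prod_dvd_of_coprime hpair key
  have heq : (∏ p ∈ n.primeFactors, (p : ℤ) ^ (n.factorization p)) = (n : ℤ) := by
    have h := Nat.factorization_prod_pow_eq_self hn0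
    rw [Nat.prod_factorization_eq_prod_primeFactors] at h
    exact_mod_cast congrArg (Nat.cast : ℕ → ℤ) h
  rwa [heq] at hprod

private lemma fib_mod_two : ∀ n : ℕ, Nat.fib n % 2 = if n % 3 = 0 then 0 else 1
  | 0 => by simp
  | 1 => by simp
  | 2 => by simp [Nat.fib_two]
  | (t + 3) => by
    have h := fib_mod_two t
    have e : Nat.fib (t + 3) = 2 * Nat.fib (t + 1) + Nat.fib t := by
      rw [show t + 3 = (t + 1) + 2 from rfl, Nat.fib_add_two,
        show t + 2 = t + 2 from rfl, Nat.fib_add_two]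
      ring
    have e3 : (t + 3) % 3 = t % 3 := by omega
    rw [e, e3]
    omega

private lemma two_pow_mod_three : ∀ j : ℕ, 2 ^ j % 3 = if j % 2 = 0 then 1 else 2
  | 0 => by simp
  | (j + 1) => by
    have h := two_pow_mod_three j
    have e : 2 ^ (j + 1) = 2 * 2 ^ j := by ring
    rcases Nat.even_or_odd j with hj | hj
    · have hj0 : j % 2 = 0 := Nat.even_iff.mp hj
      rw [if_pos hj0] at h
      rw [e, if_neg (by omega)]
      omega
    · have hj1 : j % 2 = 1 := Nat.odd_iff.mp hj
      rw [if_neg (by omega)] at h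
      rw [e, if_pos (by omega)]
      omega

private lemma fib_diff_odd {k : ℕ} (hk : 2 ≤ k) :
    Odd ((Nat.fib (2 ^ k - 1) : ℤ) - (Nat.fib (2 ^ (k - 1) - 1) : ℤ)) := by
  have h1 := fib_mod_two (2 ^ k - 1)
  have h2 := fib_mod_two (2 ^ (k - 1) - 1)
  have p1 := two_pow_mod_three k
  have p2 := two_pow_mod_three (k - 1)
  have hk1 : (1:ℕ) ≤ 2 ^ k := Nat.one_le_two_pow
  have hk2 : (1:ℕ) ≤ 2 ^ (k - 1) := Nat.one_le_two_pow
  have hpar : k % 2 ≠ (k - 1) % 2 := by omega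
  rw [Int.odd_iff]
  -- exactly one of the two fibs is even
  rcases Nat.even_or_odd k with hke | hko
  · have : k % 2 = 0 := Nat.even_iff.mp hke
    have hk1' : (k - 1) % 2 = 1 := by omega
    rw [if_pos (by omega)] at p1
    rw [if_neg (by omega)] at p2
    rw [if_pos (by omega)] at h1
    rw [if_neg (by omega)] at h2
    omega
  · have : k % 2 = 1 := Nat.odd_iff.mp hko
    have hk1' : (k - 1) % 2 = 0 := by omega
    rw [if_neg (by omega)] at p1
    rw [if_pos (by omega)] at p2
    rw [if_neg (by omega)] at h1
    rw [if_pos (by omega)] at h2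
    omega

private lemma a_eq_aux (c : ℕ) (a : ℕ → ℕ) (h1 : a 1 = 1) (h2 : a 2 = c)
    (hrec : ∀ n : ℕ, 1 ≤ n → a (n + 2) = a (n + 1) + a n) :
    ∀ n : ℕ, 1 ≤ n → (a n : ℤ) = (Luc n : ℤ) + ((c : ℤ) - 3) * (Nat.fib (n - 1) : ℤ) := by
  intro n
  induction n using Nat.strong_induction_on with
  | _ n ih =>
    match n with
    | 0 => intro h; omega
    | 1 => intro _; simp [h1, show Luc 1 = 1 from rfl]
    | 2 => intro _
           rw [h2, show Luc 2 = 3 from rfl]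
           simp [Nat.fib_one]
    | (t + 3) =>
      intro _
      have e1 := ih (t + 2) (by omega) (by omega)
      have e2 := ih (t + 1) (by omega) (by omega)
      have ha : a (t + 3) = a (t + 2) + a (t + 1) := hrec (t + 1) (by omega)
      have hL : Luc (t + 3) = Luc (t + 2) + Luc (t + 1) := rfl
      have hF : Nat.fib (t + 2) = Nat.fib t + Nat.fib (t + 1) := Nat.fib_add_two
      have d1 : t + 3 - 1 = t + 2 := by omega
      have d2 : t + 2 - 1 = t + 1 := by omega
      have d3 : t + 1 - 1 = t := by omega
      rw [d2] at e1
      rw [d3] at e2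
      rw [d1, ha, hL, hF]
      push_cast
      push_cast at e1 e2
      linarith

theorem fibonacci_like_dold_iff_lucas (c : ℕ) (hc : 0 < c) (a : ℕ → ℕ)
    (h1 : a 1 = 1) (h2 : a 2 = c)
    (hrec : ∀ n : ℕ, 1 ≤ n → a (n + 2) = a (n + 1) + a n) :
    (∀ n : ℕ, 1 ≤ n → (n : ℤ) ∣ doldSum a n) ↔ c = 3 := by
  have harep := a_eq_aux c a h1 h2 hrec
  constructor
  · intro H
    have key : ∀ k : ℕ, 2 ≤ k → (2 : ℤ) ^ k ∣ ((c : ℤ) - 3) := by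
      intro k hk
      have hdvd := H (2 ^ k) Nat.one_le_two_pow
      rw [doldSum_prime_pow a Nat.prime_two k (by omega)] at hdvd
      have hdvd' : (2 : ℤ) ^ k ∣ (a (2 ^ k) : ℤ) - (a (2 ^ (k - 1)) : ℤ) := by
        have : ((2 ^ k : ℕ) : ℤ) = (2 : ℤ) ^ k := by push_cast; ring
        rwa [this] at hdvd
      rw [harep (2 ^ k) Nat.one_le_two_pow, harep (2 ^ (k - 1)) Nat.one_le_two_pow] at hdvd'
      have hluc : (2 : ℤ) ^ k ∣ (Luc (2 ^ k) : ℤ) - (Luc (2 ^ (k - 1)) : ℤ) := by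
        have h := luc_pp Nat.prime_two k (by omega) 1
        simpa using h
      have hD : (2 : ℤ) ^ k ∣ ((c : ℤ) - 3) *
          ((Nat.fib (2 ^ k - 1) : ℤ) - (Nat.fib (2 ^ (k - 1) - 1) : ℤ)) := by
        have e : ((c : ℤ) - 3) * ((Nat.fib (2 ^ k - 1) : ℤ) - (Nat.fib (2 ^ (k - 1) - 1) : ℤ))
            = ((Luc (2 ^ k) : ℤ) + ((c : ℤ) - 3) * (Nat.fib (2 ^ k - 1) : ℤ)
              - ((Luc (2 ^ (k - 1)) : ℤ) + ((c : ℤ) - 3) * (Nat.fib (2 ^ (k - 1) - 1) : ℤ)))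
              - ((Luc (2 ^ k) : ℤ) - (Luc (2 ^ (k - 1)) : ℤ)) := by ring
        rw [e]
        exact dvd_sub hdvd' hluc
      obtain ⟨t, ht⟩ := fib_diff_odd hk
      have hcop : IsCoprime ((2 : ℤ) ^ k)
          ((Nat.fib (2 ^ k - 1) : ℤ) - (Nat.fib (2 ^ (k - 1) - 1) : ℤ)) := by
        refine IsCoprime.pow_left ?_
        exact ⟨-t, 1, by rw [ht]; ring⟩
      exact hcop.dvd_of_dvd_mul_right hD
    have hbig := key (c + 4) (by omega)
    have hne : ((c : ℤ) - 3) = 0 := by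
      by_contra h0
      have hle : (2 : ℤ) ^ (c + 4) ≤ |(c : ℤ) - 3| :=
        Int.le_of_dvd (abs_pos.mpr h0) ((dvd_abs _ _).mpr hbig)
      have habs : |(c : ℤ) - 3| ≤ (c : ℤ) + 3 := by
        rw [abs_le]; constructor <;> omega
      have hlt : (c : ℤ) + 4 < 2 ^ (c + 4) := by
        have := Nat.lt_two_pow_self (n := c + 4)
        exact_mod_cast this
      omega
    omega
  · intro hc3
    subst hc3
    intro n hn
    have heq : doldSum a n = doldSum Luc n := by
      unfold doldSum
      refine Finset.sum_congr rfl fun d hd => ?_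
      have hd1 : 1 ≤ d := Nat.pos_of_mem_divisors hd
      have := harep d hd1
      simp only [show ((3:ℕ):ℤ) - 3 = 0 by norm_num] at this
      rw [this]
      ring
    rw [heq]
    exact luc_dold n hn
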